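/- For every finite metric space (X, d) there exist a natural number n ≥ 1 and a metric d_n on the interval [n − 1, n] inducing the standard topology on [n − 1, n], such that (X, d) admits an isometric embedding into ([n − 1, n], d_n). -/

import Mathlib

open Set Finset TopologicalSpace


/-- Every finite metric space embeds isometrically into some interval `[n - 1, n]`
equipped with a metric inducing the standard topology. -/
theorem finite_metric_embeds_in_interval (X : Type*) [MetricSpace X] [Finite X] :
    ∃ n : ℕ, 1 ≤ n ∧
      ∃ m : MetricSpace (Set.Icc ((n : ℝ) - 1) (n : ℝ)),
        m.toUniformSpace.toTopologicalSpace
          = (inferInstance : TopologicalSpace (Set.Icc ((n : ℝ) - 1) (n : ℝ))) ∧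
        ∃ g : X → Set.Icc ((n : ℝ) - 1) (n : ℝ),
          ∀ x x' : X, m.dist (g x) (g x') = dist x x' := by
  classical
  haveI : Fintype X := Fintype.ofFinite X
  refine ⟨1, le_refl 1, ?_⟩
  set k : ℕ := Fintype.card X with hk
  set e : X ≃ Fin k := Fintype.equivFin X with he
  have hkpos : (0:ℝ) < (k:ℝ) + 1 := by positivity
  -- the marked points
  set p : X → ℝ := fun x => ((e x : ℕ) + 1) / ((k:ℝ) + 1) with hp
  have hp01 : ∀ x, p x ∈ Set.Icc (0:ℝ) 1 := by
    intro x
    constructor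
    · positivity
    · rw [hp]
      simp only
      rw [div_le_one hkpos]
      have h1 : (e x : ℕ) + 1 ≤ k := (e x).isLt
      have := Nat.cast_le (α := ℝ) |>.mpr h1
      push_cast at this
      linarith
  have hp_sep : ∀ x y : X, x ≠ y → (1:ℝ) / ((k:ℝ)+1) ≤ |p x - p y| := by
    intro x y hxy
    have hne : (e x : ℕ) ≠ (e y : ℕ) := by
      intro h
      exact hxy (e.injective (Fin.ext h))
    have h1 : (1:ℝ) ≤ |((e x : ℕ):ℝ) - ((e y : ℕ):ℝ)| := by
      rcases lt_or_gt_of_ne hne with h | h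
      · have h2 := Nat.cast_le (α := ℝ) |>.mpr (Nat.succ_le_of_lt h)
        push_cast at h2
        rw [abs_sub_comm, abs_of_nonneg (by linarith)]
        linarith
      · have h2 := Nat.cast_le (α := ℝ) |>.mpr (Nat.succ_le_of_lt h)
        push_cast at h2
        rw [abs_of_nonneg (by linarith)]
        linarith
    have heq : p x - p y = (((e x : ℕ):ℝ) - ((e y : ℕ):ℝ)) / ((k:ℝ)+1) := by
      rw [hp]; ring
    rw [heq, abs_div, abs_of_pos hkpos, div_le_div_iff₀ hkpos hkpos]
    nlinarith
  have hp_inj : Function.Injective p := by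
    intro x y h
    by_contra hxy
    have := hp_sep x y hxy
    rw [h, sub_self, abs_zero] at this
    have : (0:ℝ) < 1 / ((k:ℝ)+1) := by positivity
    linarith
  -- epsilon
  set s : Finset ℝ :=
    insert (1:ℝ) (((Finset.univ : Finset (X × X)).filter (fun q => q.1 ≠ q.2)).image
      (fun q => dist q.1 q.2)) with hs
  have hs_ne : s.Nonempty := ⟨1, by simp [hs]⟩
  set ε : ℝ := s.min' hs_ne with hε
  have hε_pos : 0 < ε := by
    rw [hε, Finset.lt_min'_iff]
    intro b hb
    rw [hs, Finset.mem_insert] at hb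
    rcases hb with rfl | hb
    · norm_num
    · obtain ⟨q, hq, rfl⟩ := Finset.mem_image.mp hb
      exact dist_pos.mpr (Finset.mem_filter.mp hq).2
  have hε_le_one : ε ≤ 1 := Finset.min'_le _ _ (by simp [hs])
  have hε_le_dist : ∀ x y : X, x ≠ y → ε ≤ dist x y := by
    intro x y hxy
    refine Finset.min'_le _ _ ?_
    rw [hs, Finset.mem_insert]
    right
    exact Finset.mem_image.mpr ⟨(x, y), Finset.mem_filter.mpr ⟨Finset.mem_univ _, hxy⟩, rfl⟩
  -- bump functions
  set w : X → ℝ → ℝ := fun x a => max 0 (1 - |a - p x| * ((k:ℝ)+1)) with hw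
  have hw_self : ∀ x, w x (p x) = 1 := by
    intro x; rw [hw]; simp
  have hw_other : ∀ x y, x ≠ y → w y (p x) = 0 := by
    intro x y hxy
    rw [hw]
    simp only [max_eq_left_iff]
    have h := hp_sep x y hxy
    rw [div_le_iff₀ hkpos] at h
    nlinarith
  -- the embedding into ℓ∞
  set K : X → ↥(lp (fun _ : ℕ => ℝ) ⊤) := kuratowskiEmbedding X with hK
  have hK_isom : Isometry K := kuratowskiEmbedding.isometry X
  set f : ℝ → ↥(lp (fun _ : ℕ => ℝ) ⊤) := fun a => ∑ x, w x a • K x with hf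
  have hf_cont : Continuous f := by
    rw [hf]
    refine continuous_finset_sum _ (fun x _ => Continuous.smul (f := fun a => w x a) (g := fun _ => K x) ?_ continuous_const)
    rw [hw]
    fun_prop
  have hf_p : ∀ x, f (p x) = K x := by
    intro x
    rw [hf]
    show ∑ y : X, w y (p x) • K y = K x
    rw [Finset.sum_eq_single x]
    · rw [hw_self, one_smul]
    · intro y _ hyx
      rw [hw_other x y (fun h => hyx h.symm), zero_smul]
    · intro h
      exact absurd (Finset.mem_univ x) h
  -- the map on the interval
  set I : Set ℝ := Set.Icc (((1:ℕ):ℝ) - 1) ((1:ℕ):ℝ) with hI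
  set φ : I → ℝ × ↥(lp (fun _ : ℕ => ℝ) ⊤) := fun a => (ε * (a:ℝ), f a) with hφ
  have hφ_inj : Function.Injective φ := by
    intro a b h
    have h1 : ε * (a:ℝ) = ε * (b:ℝ) := congrArg Prod.fst h
    exact Subtype.ext (mul_left_cancel₀ hε_pos.ne' h1)
  refine ⟨MetricSpace.induced φ hφ_inj inferInstance, ?_, ?_⟩
  · -- topology
    have h1 : (MetricSpace.induced φ hφ_inj
        inferInstance).toUniformSpace.toTopologicalSpace
        = TopologicalSpace.induced φ inferInstance :=
      UniformSpace.toTopologicalSpace_comap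
    rw [h1]
    have hφ_cont : Continuous φ := by
      rw [hφ]
      exact Continuous.prodMk (continuous_const.mul continuous_subtype_val)
        (hf_cont.comp continuous_subtype_val)
    have hcomp : Topology.IsInducing (Prod.fst ∘ φ) := by
      have heq : (Prod.fst ∘ φ) = fun a : I => ε * (a:ℝ) := rfl
      rw [heq]
      exact ((Homeomorph.mulLeft₀ ε hε_pos.ne').isInducing).comp Topology.IsInducing.subtypeVal
    exact ((Topology.IsInducing.of_comp hφ_cont continuous_fst hcomp).eq_induced).symm
  · -- the isometric embedding
    have hmem : ∀ x : X, p x ∈ I := by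
      intro x
      have := hp01 x
      rw [hI]
      push_cast
      simpa using this
    refine ⟨fun x => ⟨p x, hmem x⟩, ?_⟩
    intro x x'
    show dist (φ ⟨p x, hmem x⟩) (φ ⟨p x', hmem x'⟩) = dist x x'
    rw [hφ]
    simp only
    rw [Prod.dist_eq, hf_p, hf_p, hK_isom.dist_eq]
    rcases eq_or_ne x x' with rfl | hxx'
    · simp
    · have h1 : dist (ε * p x) (ε * p x') ≤ dist x x' := by
        rw [Real.dist_eq]
        have : |ε * p x - ε * p x'| = ε * |p x - p x'| := by
          rw [← mul_sub, abs_mul, abs_of_pos hε_pos]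
        rw [this]
        have hle : |p x - p x'| ≤ 1 := by
          have h0 := hp01 x
          have h1 := hp01 x'
          rw [abs_le]
          constructor <;> [linarith [h0.1, h1.2]; linarith [h0.2, h1.1]]
        calc ε * |p x - p x'| ≤ ε * 1 := by
              exact mul_le_mul_of_nonneg_left hle hε_pos.le
          _ = ε := mul_one ε
          _ ≤ dist x x' := hε_le_dist x x' hxx'
      exact sup_eq_right.mpr h1
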